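/- Let A be a 6 × 6 integer matrix in the symplectic group Sp(6, ℤ), and let β ∈ ℝ be an eigenvalue of A with β > 1 whose degree over ℚ equals 3. Suppose that every complex root γ of the characteristic polynomial of A with γ ≠ β satisfies |γ| < β. Then β is a Pisot number. -/

import Mathlib

open Matrix

namespace Stmt9Aux

open Polynomial


abbrev Idx := Fin 3 ⊕ Fin 3

lemma eval_charpoly_det (M : Matrix Idx Idx ℂ) (x : ℂ) :
    M.charpoly.eval x = (x • (1 : Matrix Idx Idx ℂ) - M).det := by
  rw [Matrix.charpoly, ← Polynomial.coe_evalRingHom, RingHom.map_det]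
  congr 1
  ext i j
  by_cases h : i = j <;>
    simp [Matrix.charmatrix_apply, h, Matrix.one_apply, Matrix.diagonal_apply,
      Matrix.sub_apply, Matrix.smul_apply, Matrix.map_apply]

lemma recip_root (A : Matrix Idx Idx ℤ)
    (hA : Aᵀ * Matrix.fromBlocks (0 : Matrix (Fin 3) (Fin 3) ℤ) (-1) 1 0 * A =
      Matrix.fromBlocks (0 : Matrix (Fin 3) (Fin 3) ℤ) (-1) 1 0)
    (γ : ℂ) (hγ : γ ≠ 0)
    (h0 : ((A.map (Int.cast : ℤ → ℂ)).charpoly).eval γ = 0) :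
    ((A.map (Int.cast : ℤ → ℂ)).charpoly).eval γ⁻¹ = 0 := by
  set Aℂ : Matrix Idx Idx ℂ := A.map (Int.cast : ℤ → ℂ) with hAℂ
  set Jℂ : Matrix Idx Idx ℂ := Matrix.fromBlocks 0 (-1) 1 0 with hJℂ
  have hmapJ : (Matrix.fromBlocks (0 : Matrix (Fin 3) (Fin 3) ℤ) (-1) 1 0).map
      (Int.cast : ℤ → ℂ) = Jℂ := by
    ext i j
    rcases i with i | i <;> rcases j with j | j <;>
      simp [Matrix.map_apply, Matrix.one_apply, hJℂ]
  have hAc : Aℂᵀ * Jℂ * Aℂ = Jℂ := by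
    have h := congrArg
      (RingHom.mapMatrix (Int.castRingHom ℂ) : Matrix Idx Idx ℤ →+* Matrix Idx Idx ℂ) hA
    simpa only [_root_.map_mul, RingHom.mapMatrix_apply, Int.coe_castRingHom,
      Matrix.transpose_map, hmapJ] using h
  have hJJ : Jℂ * Jℂ = -1 := by
    rw [hJℂ, Matrix.fromBlocks_multiply]
    simp [← Matrix.fromBlocks_one, Matrix.fromBlocks_neg]
  set B : Matrix Idx Idx ℂ := -(Jℂ * Aℂᵀ * Jℂ) with hB
  have h1 : (Jℂ * Aℂᵀ * Jℂ) * Aℂ = -1 := by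
    rw [Matrix.mul_assoc, Matrix.mul_assoc, ← Matrix.mul_assoc Aℂᵀ, hAc, hJJ]
  have hBA : B * Aℂ = 1 := by rw [hB, Matrix.neg_mul, h1, neg_neg]
  have hAB : Aℂ * B = 1 := mul_eq_one_comm.mp hBA
  have key1 : γ⁻¹ • (1 : Matrix Idx Idx ℂ) - Aℂ = (-Aℂ) * (1 - γ⁻¹ • B) := by
    rw [Matrix.mul_sub, Matrix.mul_one, Matrix.mul_smul, Matrix.neg_mul, hAB, smul_neg,
      sub_neg_eq_add, ← sub_eq_neg_add]
  have key2 : (1 : Matrix Idx Idx ℂ) - γ⁻¹ • B = γ⁻¹ • (γ • (1 : Matrix Idx Idx ℂ) - B) := by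
    rw [smul_sub, smul_smul, inv_mul_cancel₀ hγ, one_smul]
  have key3 : (-Jℂ) * ((γ • (1 : Matrix Idx Idx ℂ) - Aℂ)ᵀ) * Jℂ
      = γ • (1 : Matrix Idx Idx ℂ) - B := by
    rw [hB]
    simp only [Matrix.transpose_sub, Matrix.transpose_smul, Matrix.transpose_one,
      Matrix.mul_sub, Matrix.sub_mul, Matrix.add_mul, Matrix.mul_smul, Matrix.smul_mul,
      Matrix.mul_one, Matrix.neg_mul, Matrix.mul_neg, hJJ, neg_neg, smul_neg, sub_neg_eq_add]
  rw [eval_charpoly_det] at h0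
  rw [eval_charpoly_det, key1, Matrix.det_mul, key2, Matrix.det_smul, ← key3,
    Matrix.det_mul, Matrix.det_mul, Matrix.det_transpose, h0]
  simp

end Stmt9Aux

open Stmt9Aux Polynomial

/-- A Pisot number: a real algebraic integer `β > 1` all of whose Galois conjugates
(the other complex roots of its minimal polynomial over `ℚ`) have modulus `< 1`. -/
def IsPisot (β : ℝ) : Prop :=
  1 < β ∧ IsIntegral ℤ β ∧
    ∀ z : ℂ, z ≠ (β : ℂ) → Polynomial.aeval z (minpoly ℚ β) = 0 → ‖z‖ < 1

theorem stmt_9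
    (A : Matrix (Fin 3 ⊕ Fin 3) (Fin 3 ⊕ Fin 3) ℤ)
    (hA : Aᵀ * Matrix.fromBlocks (0 : Matrix (Fin 3) (Fin 3) ℤ) (-1) 1 0 * A =
      Matrix.fromBlocks (0 : Matrix (Fin 3) (Fin 3) ℤ) (-1) 1 0)
    (β : ℝ) (hβ1 : 1 < β)
    (hroot : ((A.map (Int.cast : ℤ → ℝ)).charpoly).eval β = 0)
    (hdeg : (minpoly ℚ β).natDegree = 3)
    (hmax : ∀ γ : ℂ, γ ≠ (β : ℂ) →
      ((A.map (Int.cast : ℤ → ℂ)).charpoly).eval γ = 0 → ‖γ‖ < β) :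
    IsPisot β := by
  have hβ0 : (0:ℝ) < β := lt_trans one_pos hβ1
  have hβne : (β:ℂ) ≠ 0 := Complex.ofReal_ne_zero.mpr hβ0.ne'
  have hcharR : (A.map (Int.cast : ℤ → ℝ)).charpoly = A.charpoly.map (Int.castRingHom ℝ) :=
    Matrix.charpoly_map A (Int.castRingHom ℝ)
  have hcharC : (A.map (Int.cast : ℤ → ℂ)).charpoly = A.charpoly.map (Int.castRingHom ℂ) :=
    Matrix.charpoly_map A (Int.castRingHom ℂ)
  have hER : ∀ (p : Polynomial ℤ) (x : ℝ),
      Polynomial.eval x (p.map (Int.castRingHom ℝ)) = Polynomial.aeval x p := by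
    intro p x
    rw [Polynomial.eval_map, Polynomial.aeval_def, algebraMap_int_eq]
  have hEC : ∀ (p : Polynomial ℤ) (x : ℂ),
      Polynomial.eval x (p.map (Int.castRingHom ℂ)) = Polynomial.aeval x p := by
    intro p x
    rw [Polynomial.eval_map, Polynomial.aeval_def, algebraMap_int_eq]
  have h1 : Polynomial.aeval (β:ℝ) A.charpoly = 0 := by
    rw [← hER, ← hcharR]; exact hroot
  have hint : IsIntegral ℤ β := ⟨A.charpoly, A.charpoly_monic, h1⟩
  have hβC : Polynomial.eval ((β:ℝ):ℂ) ((A.map (Int.cast : ℤ → ℂ)).charpoly) = 0 := by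
    rw [hcharC, hEC]
    rw [show ((β:ℝ):ℂ) = algebraMap ℝ ℂ β from rfl, Polynomial.aeval_algebraMap_apply, h1,
      map_zero]
  have recip : ∀ γ : ℂ, γ ≠ 0 → ((A.map (Int.cast : ℤ → ℂ)).charpoly).eval γ = 0 →
      ((A.map (Int.cast : ℤ → ℂ)).charpoly).eval γ⁻¹ = 0 := fun γ h h' => recip_root A hA γ h h'
  have hβinvC : Polynomial.eval (((β⁻¹:ℝ)):ℂ) ((A.map (Int.cast : ℤ → ℂ)).charpoly) = 0 := by
    have := recip _ hβne hβC
    rwa [← Complex.ofReal_inv] at this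
  have h1' : Polynomial.aeval (β⁻¹:ℝ) A.charpoly = 0 := by
    have h2 : algebraMap ℝ ℂ (Polynomial.aeval (β⁻¹:ℝ) A.charpoly) = 0 := by
      rw [← Polynomial.aeval_algebraMap_apply]
      rw [hcharC, hEC] at hβinvC
      exact hβinvC
    exact (map_eq_zero_iff _ Complex.ofReal_injective).mp h2
  have hintInv : IsIntegral ℤ (β⁻¹:ℝ) := ⟨A.charpoly, A.charpoly_monic, h1'⟩
  -- constant coefficient of minpoly ℤ β is ±1
  set q : Polynomial ℤ := minpoly ℤ β with hqdef
  have hq0 : q.coeff 0 = 1 ∨ q.coeff 0 = -1 := by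
    set m : Polynomial ℤ := minpoly ℤ (β⁻¹:ℝ) with hmdef
    have hm : m.Monic := minpoly.monic hintInv
    have hrev : Polynomial.aeval (β:ℝ) m.reverse = 0 := by
      letI : Invertible (β⁻¹:ℝ) := invertibleOfNonzero (inv_ne_zero hβ0.ne')
      have hiff := Polynomial.eval₂_reverse_eq_zero_iff (algebraMap ℤ ℝ) (β⁻¹:ℝ) m
      have hval : Polynomial.eval₂ (algebraMap ℤ ℝ) (β⁻¹:ℝ) m = 0 := minpoly.aeval ℤ _
      have hβeq : (⅟(β⁻¹:ℝ) : ℝ) = β := by rw [invOf_eq_inv, inv_inv]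
      rw [Polynomial.aeval_def, ← hβeq]
      exact hiff.mpr hval
    obtain ⟨s, hs⟩ := minpoly.isIntegrallyClosed_dvd hint hrev
    have hcoeff : (1:ℤ) = q.coeff 0 * s.coeff 0 := by
      have := congrArg (fun f => Polynomial.coeff f 0) hs
      simpa [Polynomial.coeff_zero_reverse, Polynomial.mul_coeff_zero, hm.leadingCoeff] using this
    have : IsUnit (q.coeff 0) := IsUnit.of_mul_eq_one _ hcoeff.symm
    exact Int.isUnit_iff.mp this
  -- minpoly over ℚ
  have hQint : IsIntegral ℚ β := hint.tower_top
  set p : Polynomial ℚ := minpoly ℚ β with hpdef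
  have hpq : p = q.map (algebraMap ℤ ℚ) := minpoly.isIntegrallyClosed_eq_field_fractions' ℚ hint
  have hpmonic : p.Monic := minpoly.monic hQint
  have hp0 : p.coeff 0 = 1 ∨ p.coeff 0 = -1 := by
    rw [hpq]
    rcases hq0 with h | h <;> [left; right] <;> simp [Polynomial.coeff_map, h]
  set pc : Polynomial ℂ := p.map (algebraMap ℚ ℂ) with hpcdef
  have hpcmonic : pc.Monic := hpmonic.map _
  have hpcne : pc ≠ 0 := hpcmonic.ne_zero
  have hsplit : Splits pc := IsAlgClosed.splits pc
  have hcard : pc.roots.card = 3 := by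
    rw [← hsplit.natDegree_eq_card_roots, hpcdef, hpmonic.natDegree_map, ← hdeg]
  have hdegc : pc.natDegree = 3 := by
    rw [hpcdef, hpmonic.natDegree_map]; exact hdeg
  have hprod : pc.roots.prod = -(pc.coeff 0) := by
    have hsp : Splits pc := IsAlgClosed.splits pc
    have h := hsp.coeff_zero_eq_prod_roots_of_monic hpcmonic
    rw [hdegc] at h
    rw [h]; ring
  have habs0 : ‖(pc.coeff 0)‖ = 1 := by
    rw [hpcdef, Polynomial.coeff_map]
    rcases hp0 with h | h <;> simp [h]
  -- membership of β
  have hevalβ : Polynomial.eval ((β:ℝ):ℂ) pc = 0 := by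
    rw [hpcdef, Polynomial.eval_map, ← Polynomial.aeval_def,
      show ((β:ℝ):ℂ) = algebraMap ℝ ℂ β from rfl, Polynomial.aeval_algebraMap_apply,
      hpdef, minpoly.aeval, map_zero]
  have hβmem : ((β:ℝ):ℂ) ∈ pc.roots := by
    rw [Polynomial.mem_roots hpcne]; exact hevalβ
  -- p divides the charpoly over ℚ, hence pc divides charpoly over ℂ
  have hdvdC : pc ∣ (A.map (Int.cast : ℤ → ℂ)).charpoly := by
    have hdvdQ : p ∣ A.charpoly.map (Int.castRingHom ℚ) := by
      apply minpoly.dvd ℚ β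
      rw [show (Int.castRingHom ℚ) = algebraMap ℤ ℚ from rfl, Polynomial.aeval_map_algebraMap]
      exact h1
    have := Polynomial.map_dvd (algebraMap ℚ ℂ) hdvdQ
    rw [Polynomial.map_map] at this
    rw [hcharC, show ((algebraMap ℚ ℂ).comp (Int.castRingHom ℚ)) = Int.castRingHom ℂ from
      Subsingleton.elim _ _] at *
    exact this
  have final : ∀ z : ℂ, z ≠ ((β:ℝ):ℂ) → Polynomial.aeval z p = 0 → ‖z‖ < 1 := by
    intro z hzne hz
    by_contra hz1
    push_neg at hz1
    have hzmem : z ∈ pc.roots := by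
      rw [Polynomial.mem_roots hpcne]
      rw [hpcdef, Polynomial.IsRoot, Polynomial.eval_map, ← Polynomial.aeval_def]
      exact hz
    -- decompose the multiset of roots
    have hS : pc.roots = ((β:ℝ):ℂ) ::ₘ pc.roots.erase ((β:ℝ):ℂ) :=
      (Multiset.cons_erase hβmem).symm
    have hzT : z ∈ pc.roots.erase ((β:ℝ):ℂ) := (Multiset.mem_erase_of_ne hzne).mpr hzmem
    have hT : pc.roots.erase ((β:ℝ):ℂ) = z ::ₘ (pc.roots.erase ((β:ℝ):ℂ)).erase z :=
      (Multiset.cons_erase hzT).symm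
    have hUcard : ((pc.roots.erase ((β:ℝ):ℂ)).erase z).card = 1 := by
      rw [Multiset.card_erase_of_mem hzT, Multiset.card_erase_of_mem hβmem, hcard]; rfl
    obtain ⟨w, hw⟩ := Multiset.card_eq_one.mp hUcard
    have hwmem : w ∈ pc.roots := by
      have : w ∈ (pc.roots.erase ((β:ℝ):ℂ)).erase z := by rw [hw]; exact Multiset.mem_singleton_self w
      exact Multiset.mem_of_mem_erase (Multiset.mem_of_mem_erase this)
    have hprodβ : ((β:ℝ):ℂ) * (z * w) = -(pc.coeff 0) := by
      rw [← hprod, hS, hT, hw, Multiset.prod_cons, Multiset.prod_cons, Multiset.prod_singleton]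
    have habsprod : β * (‖z‖ * ‖w‖) = 1 := by
      have := congrArg (‖·‖) hprodβ
      rwa [norm_mul, norm_mul, norm_neg, habs0, Complex.norm_real, Real.norm_of_nonneg hβ0.le] at this
    have hane : ‖z‖ ≠ 0 := by
      intro h; rw [h, zero_mul, mul_zero] at habsprod; exact absurd habsprod (by norm_num)
    have hwne : ‖w‖ ≠ 0 := by
      intro h; rw [h, mul_zero, mul_zero] at habsprod; exact absurd habsprod (by norm_num)
    have hw0 : w ≠ 0 := by
      intro h; rw [h] at hwne; simp at hwne
    have hwroot : Polynomial.eval w ((A.map (Int.cast : ℤ → ℂ)).charpoly) = 0 := by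
      obtain ⟨t, ht⟩ := hdvdC
      rw [ht, Polynomial.eval_mul]
      have hwpc : Polynomial.eval w pc = 0 := (Polynomial.mem_roots hpcne).mp hwmem
      rw [hwpc, zero_mul]
    have hwinv : Polynomial.eval w⁻¹ ((A.map (Int.cast : ℤ → ℂ)).charpoly) = 0 :=
      recip w hw0 hwroot
    by_cases hcase : w⁻¹ = ((β:ℝ):ℂ)
    · -- degenerate case: w = β⁻¹, forces z rational
      have hwval : w = (((β:ℝ):ℂ))⁻¹ := by rw [← hcase, inv_inv]
      have hwabs : ‖w‖ = β⁻¹ := by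
        rw [hwval, norm_inv, Complex.norm_real, Real.norm_of_nonneg hβ0.le]
      have haz : ‖z‖ = 1 := by
        rw [hwabs] at habsprod
        field_simp at habsprod
        nlinarith only [habsprod, hβ0]
      have hzval : z = -(pc.coeff 0) := by
        rw [← hprodβ, hwval]
        field_simp
      set r : ℚ := -(p.coeff 0) with hrdef
      have hzr : z = algebraMap ℚ ℂ r := by
        rw [hzval, hpcdef, Polynomial.coeff_map, hrdef, map_neg]
      have hr : Polynomial.aeval r p = 0 := by
        have h3 : algebraMap ℚ ℂ (Polynomial.aeval r p) = 0 := by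
          rw [← Polynomial.aeval_algebraMap_apply, ← hzr]; exact hz
        exact (map_eq_zero_iff _ (algebraMap ℚ ℂ).injective).mp h3
      have hre : Polynomial.eval r p = 0 := by
        simpa [Polynomial.aeval_def, Polynomial.eval₂_eq_eval_map] using hr
      have hdvd1 : (X - C r) ∣ p := Polynomial.dvd_iff_isRoot.mpr hre
      obtain ⟨c, hc⟩ := hdvd1
      have hirr : Irreducible p := minpoly.irreducible hQint
      rcases hirr.isUnit_or_isUnit hc with hu | hu
      · exact (Polynomial.not_isUnit_X_sub_C r) hu
      · have hcne : c ≠ 0 := hu.ne_zero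
        have hd1 : p.natDegree = 1 := by
          rw [hc, Polynomial.natDegree_mul (Polynomial.X_sub_C_ne_zero r) hcne,
            Polynomial.natDegree_X_sub_C, Polynomial.natDegree_eq_zero_of_isUnit hu]
        rw [hdeg] at hd1
        exact absurd hd1 (by norm_num)
    · have hlt := hmax w⁻¹ hcase hwinv
      rw [norm_inv] at hlt
      have h2 : ‖w‖ = (β * ‖z‖)⁻¹ := by
        field_simp
        nlinarith only [habsprod, hβ0]
      rw [h2, inv_inv] at hlt
      nlinarith only [hz1, hβ0, hlt]
  exact ⟨hβ1, hint, final⟩
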